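/- arXiv:1706.09019 — 6 statements merged into one kernel-verified Lean document; each statement's English description precedes it below -/
import Mathlib

section
/- (Lemma 2(i).) For every Z ∈ ℂ^{n×k} and every V ∈ ℂ^{n×k}, it holds that Vᴴ A V ⪯ H_A(V, Z) in the Loewner order. -/
open Matrix ComplexOrder

/-- `H_A(V, Z) = Vᴴ A⁺ V + Zᴴ A⁻ V + Vᴴ A⁻ Z − Zᴴ A⁻ Z`, the convex majorant of
`Vᴴ A V` obtained by linearizing the concave part at `Z`. -/
noncomputable def Hmat {n k : ℕ} (Ap Am : Matrix (Fin n) (Fin n) ℂ)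
    (V Z : Matrix (Fin n) (Fin k) ℂ) : Matrix (Fin k) (Fin k) ℂ :=
  Vᴴ * Ap * V + Zᴴ * Am * V + Vᴴ * Am * Z - Zᴴ * Am * Z

/-- **Lemma 2(i).** For every `Z ∈ ℂ^{n×k}` and every `V ∈ ℂ^{n×k}`,
`Vᴴ A V ⪯ H_A(V, Z)` in the Loewner order, where `A = A⁺ + A⁻` is a fixed decomposition
of the Hermitian matrix `A` into a positive semidefinite part `A⁺` and a negative
semidefinite part `A⁻`. -/
theorem stmt1 {n k : ℕ} (A Ap Am : Matrix (Fin n) (Fin n) ℂ)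
    (hA : A.IsHermitian) (hAp : Ap.PosSemidef) (hAm : (-Am).PosSemidef)
    (hdec : A = Ap + Am) (Z V : Matrix (Fin n) (Fin k) ℂ) :
    (Hmat Ap Am V Z - Vᴴ * A * V).PosSemidef := by
  have key : Hmat Ap Am V Z - Vᴴ * A * V = (V - Z)ᴴ * (-Am) * (V - Z) := by
    subst hdec
    simp only [Hmat, conjTranspose_sub, conjTranspose_add, conjTranspose_neg, Matrix.sub_mul,
      Matrix.mul_sub, Matrix.mul_neg, Matrix.neg_mul, Matrix.add_mul, Matrix.mul_add, neg_neg]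
    abel
  rw [key]
  exact hAm.conjTranspose_mul_mul_same (V - Z)
end

section
/- (Lemma 2(ii).) Let M ∈ ℝ^{k×k} be symmetric positive semidefinite. Then for every Z ∈ ℂ^{n×k} and every V ∈ ℂ^{n×k}, Tr(M Vᴴ A V) ≤ Tr(M H_A(V, Z)); here both traces are real numbers since Vᴴ A V and H_A(V, Z) are Hermitian and M is real symmetric (viewed as a complex matrix via coercion). -/
open Matrix ComplexOrder

lemma psd_trace_nonneg {k : ℕ} {X : Matrix (Fin k) (Fin k) ℂ}
    (hX : X.PosSemidef) : 0 ≤ X.trace := by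
  rw [Matrix.trace]
  apply Finset.sum_nonneg
  intro i _
  exact hX.diag_nonneg

lemma psd_mul_psd_trace_nonneg {k : ℕ} {P Q : Matrix (Fin k) (Fin k) ℂ}
    (hP : P.PosSemidef) (hQ : Q.PosSemidef) : 0 ≤ (P * Q).trace := by
  obtain ⟨B, rfl⟩ := (by open scoped MatrixOrder in exact CStarAlgebra.nonneg_iff_eq_star_mul_self.mp hP.nonneg :
    ∃ B : Matrix (Fin k) (Fin k) ℂ, P = Bᴴ * B)
  have : (Bᴴ * B * Q).trace = (B * Q * Bᴴ).trace := by
    rw [Matrix.mul_assoc, Matrix.trace_mul_comm, Matrix.mul_assoc]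
  rw [this]
  exact psd_trace_nonneg (hQ.mul_mul_conjTranspose_same B)

lemma psd_map_ofReal {k : ℕ} {M : Matrix (Fin k) (Fin k) ℝ}
    (hM : M.PosSemidef) : (M.map Complex.ofReal).PosSemidef := by
  obtain ⟨B, rfl⟩ := (by open scoped MatrixOrder in exact CStarAlgebra.nonneg_iff_eq_star_mul_self.mp hM.nonneg :
    ∃ B : Matrix (Fin k) (Fin k) ℝ, M = Bᴴ * B)
  have : (Bᴴ * B).map Complex.ofReal = (B.map Complex.ofReal)ᴴ * (B.map Complex.ofReal) := by
    ext i j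
    simp [Matrix.mul_apply, Matrix.conjTranspose_apply]
  rw [this]
  exact Matrix.posSemidef_conjTranspose_mul_self _

/-- **Lemma 2(ii).** Let `M ∈ ℝ^{k×k}` be symmetric positive semidefinite.
Then for every `Z ∈ ℂ^{n×k}` and every `V ∈ ℂ^{n×k}`,
`Tr(M Vᴴ A V) ≤ Tr(M H_A(V, Z))`; both traces are real numbers since `Vᴴ A V` and
`H_A(V, Z)` are Hermitian and `M` is real symmetric (viewed as a complex matrix via
the entrywise coercion `ℝ → ℂ`), so the inequality is stated between their real parts. -/
theorem stmt2 {n k : ℕ} (A Ap Am : Matrix (Fin n) (Fin n) ℂ)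
    (hA : A.IsHermitian) (hAp : Ap.PosSemidef) (hAm : (-Am).PosSemidef)
    (hdec : A = Ap + Am)
    (M : Matrix (Fin k) (Fin k) ℝ) (hM : M.PosSemidef)
    (Z V : Matrix (Fin n) (Fin k) ℂ) :
    ((M.map Complex.ofReal) * (Vᴴ * A * V)).trace.re
      ≤ ((M.map Complex.ofReal) * Hmat Ap Am V Z).trace.re := by
  set Mc := M.map Complex.ofReal
  have hdiff : Hmat Ap Am V Z - Vᴴ * A * V = (V - Z)ᴴ * (-Am) * (V - Z) := by
    subst hdec
    simp only [Hmat, Matrix.conjTranspose_sub, Matrix.sub_mul, Matrix.mul_sub,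
      Matrix.mul_add, Matrix.add_mul, Matrix.mul_neg, Matrix.neg_mul]
    abel
  have hkey : 0 ≤ (Mc * (Hmat Ap Am V Z - Vᴴ * A * V)).trace :=
    psd_mul_psd_trace_nonneg (psd_map_ofReal hM)
      (hdiff ▸ hAm.conjTranspose_mul_mul_same (V - Z))
  rw [Matrix.mul_sub, Matrix.trace_sub] at hkey
  have := Complex.le_def.mp hkey
  simp only [Complex.zero_re, Complex.sub_re] at this
  linarith [this.1]
end

section
/- (Proposition 1, per-constraint form.) Let A ∈ ℂ^{n×n} be Hermitian with a fixed decomposition A = A⁺ + A⁻ (A⁺ ⪰ 0, A⁻ ⪯ 0), let V₀, V ∈ ℂ^{n×k}, b, x ∈ ℝ^p, c ∈ ℝ^k, and set C := (e₁cᵀ + ce₁ᵀ)/2. Suppose Λ ∈ ℝ^ℓ satisfies Λⱼ ≤ 0 for all j and H_A(V, V₀) − C + (bᵀx)·e₁e₁ᵀ − Σ_{j=1}^{ℓ} Λⱼ Wⱼ ⪯ 0 (with real matrices coerced to complex). Then for every ξ ∈ Ξ, the real number ξᵀ(VᴴAV)ξ satisfies ξᵀ(VᴴAV)ξ + bᵀx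 ≤ cᵀξ. -/
open Matrix ComplexOrder

/-- The first standard basis vector `e₁ ∈ ℝ^k`. -/
def e1 (k : ℕ) [NeZero k] : Fin k → ℝ := Pi.single 0 1

lemma dot_map {k : ℕ} (M : Matrix (Fin k) (Fin k) ℝ) (ξ : Fin k → ℝ) :
    (fun i => (ξ i : ℂ)) ⬝ᵥ (M.map Complex.ofReal) *ᵥ (fun i => (ξ i : ℂ))
      = ((ξ ⬝ᵥ M *ᵥ ξ : ℝ) : ℂ) := by
  simp [dotProduct, mulVec, Matrix.map_apply]

lemma dot_vmv {k : ℕ} (a b ξ : Fin k → ℝ) :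
    ξ ⬝ᵥ vecMulVec a b *ᵥ ξ = (ξ ⬝ᵥ a) * (b ⬝ᵥ ξ) := by
  simp [dotProduct, mulVec, vecMulVec_apply, Finset.mul_sum, Finset.sum_mul]
  rw [Finset.sum_comm]
  congr 1; ext j; congr 1; ext i; ring

/-- **Proposition 1, per-constraint form.** Let `A ∈ ℂ^{n×n}` be Hermitian
with a fixed decomposition `A = A⁺ + A⁻` (`A⁺ ⪰ 0`, `A⁻ ⪯ 0`), let
`V₀, V ∈ ℂ^{n×k}`, `b, x ∈ ℝ^p`, `c ∈ ℝ^k`, and set `C := (e₁cᵀ + ce₁ᵀ)/2`.  Suppose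
`Λ ∈ ℝ^ℓ` satisfies `Λⱼ ≤ 0` for all `j` and
`H_A(V, V₀) − C + (bᵀx)·e₁e₁ᵀ − Σⱼ Λⱼ Wⱼ ⪯ 0` (real matrices coerced to complex).
Then for every `ξ ∈ Ξ = {ξ : ξ₁ = 1, ξᵀWⱼξ ≥ 0 ∀j}`, the real number `ξᵀ(VᴴAV)ξ`
satisfies `ξᵀ(VᴴAV)ξ + bᵀx ≤ cᵀξ`. -/
theorem stmt6 {n k ℓ p : ℕ} [NeZero k]
    (W : Fin ℓ → Matrix (Fin k) (Fin k) ℝ) (hW : ∀ j, (W j).IsSymm)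
    (A Ap Am : Matrix (Fin n) (Fin n) ℂ) (hA : A.IsHermitian)
    (hAp : Ap.PosSemidef) (hAm : (-Am).PosSemidef) (hdec : A = Ap + Am)
    (V₀ V : Matrix (Fin n) (Fin k) ℂ)
    (b x : Fin p → ℝ) (c : Fin k → ℝ)
    (Λ : Fin ℓ → ℝ) (hΛ : ∀ j, Λ j ≤ 0)
    (hLMI : (-(Hmat Ap Am V V₀
        - (((1 / 2 : ℝ) • (vecMulVec (e1 k) c + vecMulVec c (e1 k))).map Complex.ofReal)
        + (((b ⬝ᵥ x) • vecMulVec (e1 k) (e1 k)).map Complex.ofReal)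
        - ∑ j, ((Λ j • W j).map Complex.ofReal))).PosSemidef) :
    ∀ ξ : Fin k → ℝ, ξ 0 = 1 → (∀ j, 0 ≤ ξ ⬝ᵥ (W j) *ᵥ ξ) →
      ((fun i => (ξ i : ℂ)) ⬝ᵥ (Vᴴ * A * V) *ᵥ (fun i => (ξ i : ℂ))).re + b ⬝ᵥ x
        ≤ c ⬝ᵥ ξ := by
  intro ξ h1 hΞ
  set ξc : Fin k → ℂ := fun i => (ξ i : ℂ) with hξc
  have hstar : star ξc = ξc := by funext i; simp [hξc]
  have hd : ξ ⬝ᵥ e1 k = 1 := by simp [e1, dotProduct, Pi.single_apply, h1]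
  have hd' : e1 k ⬝ᵥ ξ = 1 := by simp [e1, dotProduct, Pi.single_apply, h1]
  -- quadratic form values of the real blocks
  have hC : ξ ⬝ᵥ ((1 / 2 : ℝ) • (vecMulVec (e1 k) c + vecMulVec c (e1 k))) *ᵥ ξ = c ⬝ᵥ ξ := by
    rw [smul_mulVec, dotProduct_smul]
    simp [Matrix.add_mulVec, dotProduct_add, dot_vmv, hd, hd', dotProduct_comm ξ c]
    ring
  have hB : ξ ⬝ᵥ ((b ⬝ᵥ x) • vecMulVec (e1 k) (e1 k)) *ᵥ ξ = b ⬝ᵥ x := by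
    rw [smul_mulVec, dotProduct_smul]
    simp [dot_vmv, hd, hd']
  have hWj : ∀ j, ξ ⬝ᵥ (Λ j • W j) *ᵥ ξ = Λ j * (ξ ⬝ᵥ (W j) *ᵥ ξ) := by
    intro j; rw [smul_mulVec, dotProduct_smul]; rfl
  -- LMI inequality
  have hq := hLMI.dotProduct_mulVec_nonneg ξc
  rw [hstar, Matrix.neg_mulVec, dotProduct_neg, le_neg, neg_zero] at hq
  have hq' : (ξc ⬝ᵥ (Hmat Ap Am V V₀) *ᵥ ξc)
      - ((c ⬝ᵥ ξ : ℝ) : ℂ) + ((b ⬝ᵥ x : ℝ) : ℂ)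
      - ((∑ j, Λ j * (ξ ⬝ᵥ (W j) *ᵥ ξ) : ℝ) : ℂ) ≤ 0 := by
    have expand : ξc ⬝ᵥ (Hmat Ap Am V V₀
        - (((1 / 2 : ℝ) • (vecMulVec (e1 k) c + vecMulVec c (e1 k))).map Complex.ofReal)
        + (((b ⬝ᵥ x) • vecMulVec (e1 k) (e1 k)).map Complex.ofReal)
        - ∑ j, ((Λ j • W j).map Complex.ofReal)) *ᵥ ξc
        = (ξc ⬝ᵥ (Hmat Ap Am V V₀) *ᵥ ξc)
          - ((c ⬝ᵥ ξ : ℝ) : ℂ) + ((b ⬝ᵥ x : ℝ) : ℂ)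
          - ((∑ j, Λ j * (ξ ⬝ᵥ (W j) *ᵥ ξ) : ℝ) : ℂ) := by
      rw [Matrix.sub_mulVec, Matrix.add_mulVec, Matrix.sub_mulVec]
      rw [dotProduct_sub, dotProduct_add, dotProduct_sub]
      rw [show ((fun i => (ξ i : ℂ)) = ξc) from rfl] at *
      congr 1
      · congr 1
        · congr 1
          rw [hξc, dot_map, hC]
        · rw [hξc, dot_map, hB]
      · have hsmv : (∑ j, ((Λ j • W j).map Complex.ofReal)) *ᵥ ξc
            = ∑ j, ((Λ j • W j).map Complex.ofReal) *ᵥ ξc := by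
          ext i
          simp [Matrix.mulVec, Matrix.sum_apply, dotProduct, Finset.sum_mul]
          rw [Finset.sum_comm]
        have hds : ξc ⬝ᵥ (∑ j, ((Λ j • W j).map Complex.ofReal) *ᵥ ξc)
            = ∑ j, ξc ⬝ᵥ (((Λ j • W j).map Complex.ofReal) *ᵥ ξc) := by
          simp [dotProduct, Finset.sum_apply, Finset.mul_sum]
          rw [Finset.sum_comm]
        rw [hsmv, hds]
        push_cast
        congr 1; funext j
        rw [hξc, dot_map, hWj j]
        push_cast; ring
    rwa [expand] at hq
  have hre := (Complex.le_def.mp hq').1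
  simp only [Complex.sub_re, Complex.add_re, Complex.ofReal_re, Complex.zero_re] at hre
  -- PSD comparison: H - VᴴAV ⪰ 0
  have hpsd : ((V - V₀)ᴴ * (-Am) * (V - V₀)).PosSemidef :=
    hAm.conjTranspose_mul_mul_same (V - V₀)
  have hid : Hmat Ap Am V V₀ - Vᴴ * A * V = (V - V₀)ᴴ * (-Am) * (V - V₀) := by
    rw [hdec, Hmat]
    simp only [Matrix.conjTranspose_sub, Matrix.mul_sub, Matrix.sub_mul, Matrix.mul_add,
      Matrix.add_mul, Matrix.mul_neg, Matrix.neg_mul]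
    abel
  have hq2 := hpsd.dotProduct_mulVec_nonneg ξc
  rw [hstar, ← hid, Matrix.sub_mulVec, dotProduct_sub] at hq2
  have hre2 := (Complex.le_def.mp hq2).1
  simp only [Complex.sub_re, Complex.zero_re] at hre2
  -- sum of Λ j * q j is ≤ 0
  have hsum : (∑ j, Λ j * (ξ ⬝ᵥ (W j) *ᵥ ξ)) ≤ 0 :=
    Finset.sum_nonpos fun j _ => mul_nonpos_of_nonpos_of_nonneg (hΛ j) (hΞ j)
  linarith
end

section
/- (Feasibility-transfer step in the proof of Proposition 3.) Let A ∈ ℂ^{n×n} be Hermitian with a fixed decomposition A = A⁺ + A⁻ (A⁺ ⪰ 0, A⁻ ⪯ 0), let Z, V ∈ ℂ^{n×k}, C ∈ ℝ^{k×k} symmetric, t ∈ ℝ, and Λ ∈ ℝ^ℓ. If H_A(V, Z) − C + t·e₁e₁ᵀ − Σ_{j=1}^{ℓ} Λⱼ Wⱼ ⪯ 0, then also Vᴴ A V − C + t·e₁e₁ᵀ − Σ_{j=1}^{ℓ} Λⱼ Wⱼ ⪯ 0 (with real matrices coerced to complex). -/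
open Matrix ComplexOrder

/-- **feasibility-transfer step in the proof of Proposition 3.** Let
`A ∈ ℂ^{n×n}` be Hermitian with a fixed decomposition `A = A⁺ + A⁻` (`A⁺ ⪰ 0`,
`A⁻ ⪯ 0`), let `Z, V ∈ ℂ^{n×k}`, `C ∈ ℝ^{k×k}` symmetric, `t ∈ ℝ`, and `Λ ∈ ℝ^ℓ`.
If `H_A(V, Z) − C + t·e₁e₁ᵀ − Σⱼ Λⱼ Wⱼ ⪯ 0`, then also
`Vᴴ A V − C + t·e₁e₁ᵀ − Σⱼ Λⱼ Wⱼ ⪯ 0` (real matrices coerced to complex). -/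
theorem stmt7 {n k ℓ : ℕ} [NeZero k]
    (W : Fin ℓ → Matrix (Fin k) (Fin k) ℝ) (hW : ∀ j, (W j).IsSymm)
    (A Ap Am : Matrix (Fin n) (Fin n) ℂ) (hA : A.IsHermitian)
    (hAp : Ap.PosSemidef) (hAm : (-Am).PosSemidef) (hdec : A = Ap + Am)
    (Z V : Matrix (Fin n) (Fin k) ℂ)
    (C : Matrix (Fin k) (Fin k) ℝ) (hC : C.IsSymm)
    (t : ℝ) (Λ : Fin ℓ → ℝ)
    (h : (-(Hmat Ap Am V Z - C.map Complex.ofReal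
        + ((t • vecMulVec (e1 k) (e1 k)).map Complex.ofReal)
        - ∑ j, ((Λ j • W j).map Complex.ofReal))).PosSemidef) :
    (-(Vᴴ * A * V - C.map Complex.ofReal
        + ((t • vecMulVec (e1 k) (e1 k)).map Complex.ofReal)
        - ∑ j, ((Λ j • W j).map Complex.ofReal))).PosSemidef := by
  have key : (-(Vᴴ * A * V - C.map Complex.ofReal
        + ((t • vecMulVec (e1 k) (e1 k)).map Complex.ofReal)
        - ∑ j, ((Λ j • W j).map Complex.ofReal)))
      = (-(Hmat Ap Am V Z - C.map Complex.ofReal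
        + ((t • vecMulVec (e1 k) (e1 k)).map Complex.ofReal)
        - ∑ j, ((Λ j • W j).map Complex.ofReal)))
        + (V - Z)ᴴ * (-Am) * (V - Z) := by
    simp only [Hmat, hdec, sub_eq_add_neg, conjTranspose_add, conjTranspose_neg,
      Matrix.add_mul, Matrix.mul_add, Matrix.neg_mul, Matrix.mul_neg, neg_neg]
    abel
  rw [key]
  exact h.add (hAm.conjTranspose_mul_mul_same _)
end

section
/- (Key step in the proof of Proposition 2, combining Cases 1 and 2.) Let C ∈ ℝ^{k×k} be symmetric and ρ, γ ∈ ℝ. If the (k+1)×(k+1) real symmetric block matrix with blocks [C, (ρ/2)e₁; (ρ/2)e₁ᵀ, −γ] is positive semidefinite, then (ρ + γ)·e₁e₁ᵀ − C ⪯ 0, i.e., (ρ + γ)·e₁e₁ᵀ ⪯ C in the Loewner order. -/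
open Matrix

/-- **key step in the proof of Proposition 2, combining Cases 1 and 2.**
Let `C ∈ ℝ^{k×k}` be symmetric and `ρ, γ ∈ ℝ`.  If the `(k+1)×(k+1)` real symmetric
block matrix `[C, (ρ/2)e₁; (ρ/2)e₁ᵀ, −γ]` is positive semidefinite, then
`(ρ + γ)·e₁e₁ᵀ − C ⪯ 0`, i.e. `(ρ + γ)·e₁e₁ᵀ ⪯ C` in the Loewner order. -/
theorem stmt9 {k : ℕ} [NeZero k] (C : Matrix (Fin k) (Fin k) ℝ) (hC : C.IsSymm)
    (ρ γ : ℝ)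
    (hblock : (Matrix.fromBlocks C
        (Matrix.of fun (i : Fin k) (_ : Fin 1) => (ρ / 2) * e1 k i)
        (Matrix.of fun (_ : Fin 1) (j : Fin k) => (ρ / 2) * e1 k j)
        (Matrix.of fun (_ : Fin 1) (_ : Fin 1) => -γ)).PosSemidef) :
    (C - (ρ + γ) • vecMulVec (e1 k) (e1 k)).PosSemidef := by
  have hCsym : ∀ i j, C j i = C i j := fun i j => by
    conv_lhs => rw [← hC]
    rfl
  rw [posSemidef_iff_dotProduct_mulVec]
  constructor
  · ext i j
    simp only [conjTranspose_apply, Matrix.sub_apply, Matrix.smul_apply, vecMulVec_apply,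
      smul_eq_mul, star_trivial]
    rw [hCsym i j]
    ring
  · intro x
    have hxstar : star x = x := funext fun i => star_trivial _
    have key := hblock.dotProduct_mulVec_nonneg (Sum.elim x (fun _ => -x 0))
    rw [fromBlocks_mulVec] at key
    simp only [dotProduct_block, Sum.elim_comp_inl, Sum.elim_comp_inr] at key
    have hB : ((Matrix.of fun (i : Fin k) (_ : Fin 1) => (ρ / 2) * e1 k i) *ᵥ
        (fun _ => -x 0)) = Pi.single (0 : Fin k) ((ρ/2) * (-x 0)) := by
      ext i
      by_cases h : i = 0 <;>
        simp [mulVec, dotProduct, e1, Pi.single_apply, h]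
    have hCx : ((Matrix.of fun (_ : Fin 1) (j : Fin k) => (ρ / 2) * e1 k j) *ᵥ x)
        = fun _ => (ρ/2) * x 0 := by
      ext i
      simp only [mulVec, dotProduct, of_apply]
      have hj : ∀ j, (ρ/2) * e1 k j * x j = (Pi.single (0 : Fin k) (ρ/2) : Fin k → ℝ) j * x j := by
        intro j
        by_cases h : j = 0 <;> simp [e1, Pi.single_apply, h]
      simp only [hj]
      rw [show (∑ j, (Pi.single (0 : Fin k) (ρ/2) : Fin k → ℝ) j * x j) = Pi.single (0 : Fin k) (ρ/2) ⬝ᵥ x from rfl,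
        single_dotProduct]
    have hD : ((Matrix.of fun (_ : Fin 1) (_ : Fin 1) => -γ) *ᵥ (fun _ => -x 0))
        = fun _ => -γ * -x 0 := by
      ext i
      simp [mulVec, dotProduct]
    have h1 : star (Sum.elim x (fun _ : Fin 1 => -x 0)) ∘ Sum.inl = x := by
      ext i; simp
    have h2 : star (Sum.elim x (fun _ : Fin 1 => -x 0)) ∘ Sum.inr = fun _ : Fin 1 => -x 0 := by
      ext i; simp
    rw [h1, h2, hB, hCx, hD, dotProduct_add, dotProduct_single] at key
    simp only [dotProduct, Fin.sum_univ_one, Pi.add_apply] at key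
    -- key : 0 ≤ (x ⬝ᵥ C *ᵥ x style sum) + x 0 * (ρ/2 * -x 0) + (-x 0) * (ρ/2*x 0 + -γ*-x 0)
    have hv : vecMulVec (e1 k) (e1 k) *ᵥ x = Pi.single (0 : Fin k) (x 0) := by
      ext i
      have hj : ∀ j, e1 k i * e1 k j * x j = e1 k i * ((Pi.single (0 : Fin k) (1:ℝ) : Fin k → ℝ) j * x j) := by
        intro j
        simp [e1]
        ring
      simp only [mulVec, dotProduct, vecMulVec_apply, hj, ← Finset.mul_sum]
      rw [show (∑ j, (Pi.single (0 : Fin k) (1:ℝ) : Fin k → ℝ) j * x j) = Pi.single (0 : Fin k) (1:ℝ) ⬝ᵥ x from rfl,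
        single_dotProduct, one_mul]
      by_cases h : i = 0 <;> simp [e1, Pi.single_apply, h]
    rw [hxstar, sub_mulVec, smul_mulVec, hv, dotProduct_sub, dotProduct_smul,
      dotProduct_single]
    simp only [smul_eq_mul, dotProduct] at key ⊢
    nlinarith [key]
end

section
/- (Dual-feasibility lemma in the proof of Proposition 2.) Let A ∈ ℂ^{n×n} be Hermitian, v₀ ∈ ℂⁿ, b, x₀ ∈ ℝ^p, C ∈ ℝ^{k×k} symmetric, and W₁, …, W_ℓ ∈ ℝ^{k×k} symmetric. Suppose there exist ρ, γ ∈ ℝ and λ ∈ ℝ^ℓ with λⱼ ≤ 0 for all j such that: (a) the (k+1)×(k+1) real symmetric block matrix with blocks [C + Σ_{j=1}^{ℓ} λⱼWⱼ, (ρ/2)e₁; (ρ/2)e₁ᵀ, −γ] is positive semidefinite, and (b) the real number v₀ᴴAv₀ satisfies v₀ᴴAv₀ + bᵀx₀ ≤ ρ + γ. Then (v₀ᴴAv₀ + bᵀx₀)·e₁e₁ᵀ − C − Σ_{j=1}^{ℓ} λⱼ Wⱼ ⪯ 0. -/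
open Matrix

/-- **dual-feasibility lemma in the proof of Proposition 2.** Let
`A ∈ ℂ^{n×n}` be Hermitian, `v₀ ∈ ℂⁿ`, `b, x₀ ∈ ℝ^p`, `C ∈ ℝ^{k×k}` symmetric, and
`W₁, …, W_ℓ ∈ ℝ^{k×k}` symmetric.  Suppose there exist `ρ, γ ∈ ℝ` and `λ ∈ ℝ^ℓ` with
`λⱼ ≤ 0` for all `j` such that (a) the `(k+1)×(k+1)` real symmetric block matrix
`[C + Σⱼ λⱼWⱼ, (ρ/2)e₁; (ρ/2)e₁ᵀ, −γ]` is positive semidefinite, and (b) the real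
number `v₀ᴴAv₀` satisfies `v₀ᴴAv₀ + bᵀx₀ ≤ ρ + γ`.  Then
`(v₀ᴴAv₀ + bᵀx₀)·e₁e₁ᵀ − C − Σⱼ λⱼ Wⱼ ⪯ 0`. -/
theorem stmt12 {n k ℓ p : ℕ} [NeZero k]
    (A : Matrix (Fin n) (Fin n) ℂ) (hA : A.IsHermitian)
    (v₀ : Fin n → ℂ) (b x₀ : Fin p → ℝ)
    (C : Matrix (Fin k) (Fin k) ℝ) (hC : C.IsSymm)
    (W : Fin ℓ → Matrix (Fin k) (Fin k) ℝ) (hW : ∀ j, (W j).IsSymm)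
    (ρ γ : ℝ) (lam : Fin ℓ → ℝ) (hlam : ∀ j, lam j ≤ 0)
    (hblock : (Matrix.fromBlocks (C + ∑ j, lam j • W j)
        (Matrix.of fun (i : Fin k) (_ : Fin 1) => (ρ / 2) * e1 k i)
        (Matrix.of fun (_ : Fin 1) (j : Fin k) => (ρ / 2) * e1 k j)
        (Matrix.of fun (_ : Fin 1) (_ : Fin 1) => -γ)).PosSemidef)
    (hineq : (star v₀ ⬝ᵥ A *ᵥ v₀).re + b ⬝ᵥ x₀ ≤ ρ + γ) :
    (-(((star v₀ ⬝ᵥ A *ᵥ v₀).re + b ⬝ᵥ x₀) • vecMulVec (e1 k) (e1 k)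
        - C - ∑ j, lam j • W j)).PosSemidef := by
  set t : ℝ := (star v₀ ⬝ᵥ A *ᵥ v₀).re + b ⬝ᵥ x₀ with ht
  set M : Matrix (Fin k) (Fin k) ℝ := C + ∑ j, lam j • W j with hM
  refine Matrix.PosSemidef.of_dotProduct_mulVec_nonneg ?_ ?_
  · -- Hermitian
    rw [Matrix.IsHermitian, Matrix.conjTranspose_eq_transpose_of_trivial]
    apply Matrix.IsSymm.neg
    apply Matrix.IsSymm.sub
    apply Matrix.IsSymm.sub
    · apply Matrix.IsSymm.smul
      ext i j
      simp [Matrix.vecMulVec_apply, mul_comm]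
    · exact hC
    · show (∑ j, lam j • W j)ᵀ = _
      rw [Matrix.transpose_sum]
      exact Finset.sum_congr rfl fun j _ => (hW j).smul (lam j)
  · intro x
    have key := hblock.dotProduct_mulVec_nonneg (Sum.elim x (fun _ => -x 0))
    have hstar : star (Sum.elim x (fun _ : Fin 1 => -x 0)) =
        Sum.elim x (fun _ : Fin 1 => -x 0) := by simp
    rw [hstar, Matrix.fromBlocks_mulVec, sumElim_dotProduct_sumElim] at key
    -- compute the pieces
    have h1 : (Matrix.of fun (i : Fin k) (_ : Fin 1) => (ρ / 2) * e1 k i) *ᵥ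
        (fun _ : Fin 1 => -x 0) = fun i => -(ρ / 2) * e1 k i * x 0 := by
      funext i
      simp [Matrix.mulVec, dotProduct]
    have h2 : x ⬝ᵥ (fun i => -(ρ / 2) * e1 k i * x 0) = -(ρ / 2) * x 0 * x 0 := by
      simp [dotProduct, e1, Pi.single_apply, mul_comm, mul_assoc]
      try rw [Finset.sum_eq_single 0] <;> simp
      try ring
    have h3 : (Matrix.of fun (_ : Fin 1) (j : Fin k) => (ρ / 2) * e1 k j) *ᵥ x =
        fun _ : Fin 1 => (ρ / 2) * x 0 := by
      funext i
      simp [Matrix.mulVec, dotProduct, e1, Pi.single_apply]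
      try rw [Finset.sum_eq_single 0] <;> simp
    have h4 : (Matrix.of fun (_ : Fin 1) (_ : Fin 1) => -γ) *ᵥ
        (fun _ : Fin 1 => -x 0) = fun _ : Fin 1 => γ * x 0 := by
      funext i
      simp [Matrix.mulVec, dotProduct]
    simp only [Sum.elim_comp_inl, Sum.elim_comp_inr] at key
    rw [h1, h3, h4] at key
    have key2 : 0 ≤ x ⬝ᵥ M *ᵥ x + (-(ρ / 2) * x 0 * x 0)
        + (-x 0 * ((ρ / 2) * x 0 + γ * x 0)) := by
      have := key
      rw [dotProduct_add, h2] at this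
      simpa [dotProduct, Fin.sum_univ_one, mul_add] using this
    have hxM : (ρ + γ) * (x 0 * x 0) ≤ x ⬝ᵥ M *ᵥ x := by nlinarith [key2]
    have htle : t * (x 0 * x 0) ≤ (ρ + γ) * (x 0 * x 0) :=
      mul_le_mul_of_nonneg_right hineq (mul_self_nonneg _)
    have hgoal : x ⬝ᵥ (-(t • vecMulVec (e1 k) (e1 k) - C - ∑ j, lam j • W j)) *ᵥ x
        = x ⬝ᵥ M *ᵥ x - t * (x 0 * x 0) := by
      have hv : x ⬝ᵥ (vecMulVec (e1 k) (e1 k)) *ᵥ x = x 0 * x 0 := by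
        simp [Matrix.mulVec, dotProduct, Matrix.vecMulVec_apply, e1,
          Pi.single_apply, Finset.mul_sum]
      simp only [Matrix.neg_mulVec, dotProduct_neg, Matrix.sub_mulVec,
        dotProduct_sub, Matrix.smul_mulVec, dotProduct_smul,
        hM, Matrix.add_mulVec, dotProduct_add, hv]
      try ring_nf
      try simp [smul_eq_mul]
      try ring
    rw [show star x = x by simp, hgoal]
    linarith
end
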